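/- Let 𝕋 be a time scale, f : 𝕋 → ℝ, t ∈ 𝕋^κ, and α ∈ (0,1] with α = 1/q for some odd natural number q. If t is right-dense and f has a fractional derivative of order α at t, then f is continuous at t as a function on 𝕋 (i.e., for every ε > 0 there exists δ > 0 such that |f(t) − f(s)| ≤ ε for all s ∈ 𝕋 with |t − s| < δ). -/

import Mathlib

open Real Set Classical

/-- Forward jump operator of a time scale, with the convention `σ t = t`
when `{s ∈ T | t < s}` is empty. -/
noncomputable def tsSigma (T : Set ℝ) (t : ℝ) : ℝ :=
  if ({s | s ∈ T ∧ t < s}).Nonempty then sInf {s | s ∈ T ∧ t < s} else t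

/-- Graininess function `μ t = σ t - t`. -/
noncomputable def tsMu (T : Set ℝ) (t : ℝ) : ℝ :=
  tsSigma T t - t

/-- Backward jump operator, with the convention `ρ t = t`
when `{s ∈ T | s < t}` is empty. -/
noncomputable def tsRho (T : Set ℝ) (t : ℝ) : ℝ :=
  if ({s | s ∈ T ∧ s < t}).Nonempty then sSup {s | s ∈ T ∧ s < t} else t

/-- `T^κ`: `T` with its maximum removed if the maximum exists and is
left-scattered; `T` otherwise. -/
def tsKappa (T : Set ℝ) : Set ℝ :=
  {t | t ∈ T ∧ ¬ (IsGreatest T t ∧ tsRho T t < t)}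

/-- `t` is right-scattered when `σ t > t`. -/
def RightScattered (T : Set ℝ) (t : ℝ) : Prop :=
  t < tsSigma T t

/-- `t` is right-dense when `t < sup T` and `σ t = t`. -/
def RightDense (T : Set ℝ) (t : ℝ) : Prop :=
  (∃ s ∈ T, t < s) ∧ tsSigma T t = t

/-- Signed real power `x^α = sign(x) · |x|^α` (agrees with `rpow` for `x ≥ 0`). -/
noncomputable def fpow (α x : ℝ) : ℝ := Real.sign x * |x| ^ α

/-- `α = 1/q` for some odd natural number `q`. -/
def IsOddRecip (α : ℝ) : Prop := ∃ q : ℕ, Odd q ∧ α = 1 / (q : ℝ)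

/-- `L` is a fractional derivative of `f` of order `α` at `t` on the time scale `T`. -/
def FracDerivAt (T : Set ℝ) (f : ℝ → ℝ) (α t L : ℝ) : Prop :=
  (IsOddRecip α →
    ∀ ε > (0:ℝ), ∃ δ > (0:ℝ), ∀ s ∈ T, |t - s| < δ →
      |(f (tsSigma T t) - f s) - L * fpow α (tsSigma T t - s)|
        ≤ ε * |tsSigma T t - s| ^ α) ∧
  (¬ IsOddRecip α →
    ∀ ε > (0:ℝ), ∃ δ > (0:ℝ), ∀ s ∈ T, t - δ < s → s < t →
      |(f (tsSigma T t) - f s) - L * fpow α (tsSigma T t - s)|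
        ≤ ε * |tsSigma T t - s| ^ α)

/-- Continuity at `t` of `f` as a function on the time scale `T`. -/
def ContinuousAtTS (T : Set ℝ) (f : ℝ → ℝ) (t : ℝ) : Prop :=
  ∀ ε > (0:ℝ), ∃ δ > (0:ℝ), ∀ s ∈ T, |t - s| < δ → |f t - f s| ≤ ε

/-- Theorem 5 (i): if `α = 1/q` with `q` odd, `t ∈ T^κ` is right-dense and `f` is
fractional differentiable of order `α` at `t`, then `f` is continuous at `t`. -/
theorem fracDeriv_rightDense_continuous
    (T : Set ℝ) (hT : T.Nonempty) (hTc : IsClosed T)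
    (f : ℝ → ℝ) (t : ℝ) (ht : t ∈ tsKappa T)
    (α : ℝ) (hα : α ∈ Set.Ioc (0:ℝ) 1) (hq : IsOddRecip α)
    (hrd : RightDense T t) (L : ℝ) (hL : FracDerivAt T f α t L) :
    ContinuousAtTS T f t := by
  
  obtain ⟨-, hσ⟩ := hrd
  intro ε hε
  obtain ⟨δ1, hδ1, h1⟩ := hL.1 hq 1 one_pos
  have hα0 := hα.1
  have hLpos : (0:ℝ) < 1 + |L| := by positivity
  set c : ℝ := ε / (1 + |L|) with hc
  have hcpos : 0 < c := div_pos hε hLpos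
  refine ⟨min δ1 (c ^ (1/α)), lt_min hδ1 (Real.rpow_pos_of_pos hcpos _), ?_⟩
  intro s hs hsd
  have h2 := h1 s hs (lt_of_lt_of_le hsd (min_le_left _ _))
  rw [hσ] at h2
  have hsign : |Real.sign (t - s)| ≤ 1 := by
    rcases lt_trichotomy (t - s) 0 with h | h | h
    · rw [Real.sign_of_neg h]; norm_num
    · rw [h, Real.sign_zero]; norm_num
    · rw [Real.sign_of_pos h]; norm_num
  have hpow_nonneg : (0:ℝ) ≤ |t - s| ^ α := Real.rpow_nonneg (abs_nonneg _) _
  have habs : |L * fpow α (t - s)| ≤ |L| * |t - s| ^ α := by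
    rw [abs_mul, fpow, abs_mul, abs_of_nonneg hpow_nonneg]
    have : |Real.sign (t - s)| * |t - s| ^ α ≤ 1 * |t - s| ^ α :=
      mul_le_mul_of_nonneg_right hsign hpow_nonneg
    nlinarith [abs_nonneg L]
  have hstep : |f t - f s| ≤ (1 + |L|) * |t - s| ^ α := by
    calc |f t - f s| ≤ |(f t - f s) - L * fpow α (t - s)| + |L * fpow α (t - s)| := by
          have h := abs_add_le ((f t - f s) - L * fpow α (t - s)) (L * fpow α (t - s))
          simpa using h
      _ ≤ 1 * |t - s| ^ α + |L| * |t - s| ^ α := add_le_add h2 habs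
      _ = (1 + |L|) * |t - s| ^ α := by ring
  have hle : |t - s| ≤ c ^ (1/α) := le_of_lt (lt_of_lt_of_le hsd (min_le_right _ _))
  have hpow : |t - s| ^ α ≤ c := by
    have h3 : |t - s| ^ α ≤ (c ^ (1/α)) ^ α :=
      Real.rpow_le_rpow (abs_nonneg _) hle hα0.le
    have h4 : (c ^ (1/α)) ^ α = c := by
      rw [← Real.rpow_mul hcpos.le, one_div, inv_mul_cancel₀ (ne_of_gt hα0), Real.rpow_one]
    rwa [h4] at h3
  calc |f t - f s| ≤ (1 + |L|) * |t - s| ^ α := hstep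
    _ ≤ (1 + |L|) * c := mul_le_mul_of_nonneg_left hpow hLpos.le
    _ = ε := by rw [hc]; field_simp
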